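/- For integers r ≥ 3 and real λ > 0, define h_r(x) = Σ_{j≥r} x^j/j! for x ≥ 0. Then the function t ↦ h_{r-2}(λt)/h_{r-3}(λt) = 1 − ((λt)^{r−3}/(r−3)!)/h_{r−3}(λt) is (strictly) increasing in t on (0, ∞). -/

import Mathlib

/-- The truncated exponential series `h_r(x) = Σ_{j ≥ r} x^j / j!`. -/
noncomputable def truncExp (r : ℕ) (x : ℝ) : ℝ :=
  ∑' j : ℕ, if r ≤ j then x ^ j / (Nat.factorial j) else 0

lemma summable_trunc (r : ℕ) (x : ℝ) :
    Summable (fun j : ℕ => if r ≤ j then x ^ j / (Nat.factorial j) else 0) := by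
  have := (Real.summable_pow_div_factorial x).indicator {j | r ≤ j}
  apply this.congr
  intro j
  simp [Set.indicator_apply, Set.mem_setOf_eq]

lemma trunc_pos (r : ℕ) {x : ℝ} (hx : 0 < x) : 0 < truncExp r x := by
  refine Summable.tsum_pos (summable_trunc r x) (fun j => ?_) r ?_
  · split
    · positivity
    · exact le_refl 0
  · simp only [le_refl, if_true]
    positivity

lemma trunc_succ (s : ℕ) (x : ℝ) :
    truncExp s x = truncExp (s+1) x + x ^ s / (Nat.factorial s) := by
  unfold truncExp
  have hs : Summable (fun j : ℕ => if j = s then x ^ s / (Nat.factorial s) else 0) := by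
    apply summable_of_ne_finset_zero (s := {s})
    intro j hj
    simp only [Finset.mem_singleton] at hj
    simp [hj]
  rw [show (x ^ s / (Nat.factorial s : ℝ)) = ∑' j : ℕ, if j = s then x ^ s / (Nat.factorial s : ℝ) else 0 from (tsum_ite_eq s (fun _ => x ^ s / (Nat.factorial s : ℝ))).symm,
    ← Summable.tsum_add (summable_trunc (s+1) x) hs]
  · congr 1; ext j
    rcases lt_trichotomy j s with h | h | h
    · rw [if_neg (by omega), if_neg (by omega), if_neg (by omega)]; ring
    · subst h
      rw [if_pos le_rfl, if_neg (by omega), if_pos rfl]; ring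
    · rw [if_pos (by omega), if_pos (by omega), if_neg (by omega)]; ring


lemma key (s : ℕ) {a b : ℝ} (ha : 0 < a) (hab : a < b) :
    b ^ s * truncExp (s+1) a < a ^ s * truncExp (s+1) b := by
  have hb : 0 < b := ha.trans hab
  unfold truncExp
  rw [← tsum_mul_left, ← tsum_mul_left]
  refine Summable.tsum_lt_tsum (i := s+1) (fun j => ?_) ?_
    ((summable_trunc (s+1) a).mul_left _) ((summable_trunc (s+1) b).mul_left _)
  · by_cases h : s + 1 ≤ j
    · rw [if_pos h, if_pos h]
      obtain ⟨k, rfl⟩ : ∃ k, j = s + k := ⟨j - s, by omega⟩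
      rw [pow_add, pow_add]
      have hf : (0:ℝ) < ((s+k).factorial : ℝ) := by positivity
      rw [show b ^ s * (a ^ s * a ^ k / ((s+k).factorial : ℝ))
            = b ^ s * (a ^ s * a ^ k) / ((s+k).factorial : ℝ) by ring,
          show a ^ s * (b ^ s * b ^ k / ((s+k).factorial : ℝ))
            = a ^ s * (b ^ s * b ^ k) / ((s+k).factorial : ℝ) by ring]
      have hk : a ^ k ≤ b ^ k := pow_le_pow_left₀ ha.le hab.le k
      have hpos : (0:ℝ) ≤ a ^ s * b ^ s := by positivity
      apply div_le_div_of_nonneg_right ?_ hf.le |>.trans_eq rfl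
      nlinarith [mul_le_mul_of_nonneg_left hk hpos]
    · rw [if_neg h, if_neg h]; simp
  · rw [if_pos le_rfl, if_pos le_rfl, pow_succ, pow_succ]
    have hf : (0:ℝ) < ((s+1).factorial : ℝ) := by positivity
    rw [show b ^ s * (a ^ s * a / ((s+1).factorial : ℝ))
          = b ^ s * (a ^ s * a) / ((s+1).factorial : ℝ) by ring,
        show a ^ s * (b ^ s * b / ((s+1).factorial : ℝ))
          = a ^ s * (b ^ s * b) / ((s+1).factorial : ℝ) by ring]
    apply div_lt_div_of_pos_right ?_ hf |>.trans_eq rfl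
    have hpos : (0:ℝ) < a ^ s * b ^ s := by positivity
    nlinarith [mul_lt_mul_of_pos_left hab hpos]

theorem stmt_16 (r : ℕ) (hr : 3 ≤ r) (lam : ℝ) (hlam : 0 < lam) :
    StrictMonoOn (fun t : ℝ => truncExp (r - 2) (lam * t) / truncExp (r - 3) (lam * t))
      (Set.Ioi (0:ℝ)) := by
  obtain ⟨s, hs⟩ : ∃ s, r - 3 = s := ⟨r - 3, rfl⟩
  have h2 : r - 2 = s + 1 := by omega
  intro ta hta tb htb hlt
  simp only [Set.mem_Ioi] at hta htb
  set A := lam * ta with hA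
  set B := lam * tb with hB
  have hApos : 0 < A := by positivity
  have hBpos : 0 < B := by positivity
  have hAB : A < B := mul_lt_mul_of_pos_left hlt hlam
  simp only [hs, h2]
  rw [div_lt_div_iff₀ (trunc_pos s hApos) (trunc_pos s hBpos), trunc_succ s A, trunc_succ s B]
  have hkey := key s hApos hAB
  have hf : (0:ℝ) < (s.factorial : ℝ)⁻¹ := by positivity
  have h3 := mul_lt_mul_of_pos_right hkey hf
  rw [show lam * ta = A from rfl, show lam * tb = B from rfl]
  simp only [div_eq_mul_inv]
  nlinarith [h3]
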